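/- Let R be a commutative ring, r ∈ R, and R[ρ] = R[T]/(T(T−r)) with ρ the image of T, so every element of R[ρ] is uniquely of the form x + yρ with x, y ∈ R. Then z = x + yρ is a unit of R[ρ] if and only if both x and x + ry are units of R, and z is a non-zerodivisor of R[ρ] if and only if both x and x + ry are non-zerodivisors of R. -/

import Mathlib

open Polynomial

/-- The ring `R[ρ] = R[T]/(T(T−r))`. -/
abbrev RhoRing (R : Type*) [CommRing R] (r : R) : Type _ :=
  Polynomial R ⧸ Ideal.span {(X * (X - Polynomial.C r) : Polynomial R)}

section Aux

variable {R : Type*} [CommRing R]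

private lemma rhoAux_monic (r : R) : (X * (X - C r)).Monic :=
  monic_X.mul (monic_X_sub_C r)

private lemma rhoAux_degree (r : R) [Nontrivial R] :
    (X * (X - C r) : R[X]).degree = 2 := by
  rw [(monic_X_sub_C r).degree_mul, degree_X, degree_X_sub_C]
  rfl

private lemma rhoAux_mul (r x y u v : R) :
    (Ideal.Quotient.mk _ (C x + C y * X) : RhoRing R r) *
      Ideal.Quotient.mk _ (C u + C v * X) =
    Ideal.Quotient.mk _ (C (x * u) + C (x * v + y * u + r * y * v) * X) := by
  rw [← map_mul, Ideal.Quotient.eq, Ideal.mem_span_singleton]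
  exact ⟨C (y * v), by simp only [C_add, C_mul]; ring⟩

private lemma rhoAux_zero_iff (r u v : R) :
    (Ideal.Quotient.mk _ (C u + C v * X) : RhoRing R r) = 0 ↔ u = 0 ∧ v = 0 := by
  constructor
  · intro h
    nontriviality R
    rw [Ideal.Quotient.eq_zero_iff_mem, Ideal.mem_span_singleton,
      ← modByMonic_eq_zero_iff_dvd (rhoAux_monic r),
      (modByMonic_eq_self_iff (rhoAux_monic r)).2] at h
    · constructor
      · simpa using congrArg (fun p => coeff p 0) h
      · simpa using congrArg (fun p => coeff p 1) h
    · rw [rhoAux_degree r]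
      refine lt_of_le_of_lt ?_ (by decide : (1 : WithBot ℕ) < 2)
      rw [add_comm]
      exact degree_linear_le
  · rintro ⟨rfl, rfl⟩
    simp

private lemma rhoAux_eq_iff (r a b a' b' : R) :
    (Ideal.Quotient.mk _ (C a + C b * X) : RhoRing R r) =
      Ideal.Quotient.mk _ (C a' + C b' * X) ↔ a = a' ∧ b = b' := by
  rw [← sub_eq_zero, ← map_sub]
  have h : (C a + C b * X) - (C a' + C b' * X) = C (a - a') + C (b - b') * X := by
    simp only [C_sub]; ring
  rw [h, rhoAux_zero_iff]
  simp [sub_eq_zero]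

private lemma rhoAux_surj (r : R) (z : RhoRing R r) :
    ∃ u v : R, z = Ideal.Quotient.mk _ (C u + C v * X) := by
  obtain ⟨p, rfl⟩ := Ideal.Quotient.mk_surjective z
  rcases subsingleton_or_nontrivial R with hR | hR
  · exact ⟨0, 0, congrArg _ (Subsingleton.elim _ _)⟩
  refine ⟨(p %ₘ (X * (X - C r))).coeff 0, (p %ₘ (X * (X - C r))).coeff 1, ?_⟩
  rw [Ideal.Quotient.eq, Ideal.mem_span_singleton]
  refine ⟨p /ₘ (X * (X - C r)), ?_⟩
  have h1 : (p %ₘ (X * (X - C r))).degree ≤ 1 := by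
    have h := degree_modByMonic_lt p (rhoAux_monic r)
    rw [rhoAux_degree r] at h
    exact Order.le_of_lt_succ h
  have h2 := eq_X_add_C_of_degree_le_one h1
  have h3 := modByMonic_add_div p (X * (X - C r))
  linear_combination h2 - h3

end Aux

/-- In `R[ρ] = R[T]/(T(T−r))`, the element `z = x + yρ` is a unit iff
both `x` and `x + ry` are units of `R`, and is a non-zerodivisor iff both `x` and
`x + ry` are non-zerodivisors of `R`. -/
theorem rhoRing_isUnit_and_nonZeroDivisor_iff (R : Type*) [CommRing R] (r x y : R) :
    (IsUnit (Ideal.Quotient.mk _ (Polynomial.C x + Polynomial.C y * X) : RhoRing R r) ↔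
      IsUnit x ∧ IsUnit (x + r * y)) ∧
    ((Ideal.Quotient.mk _ (Polynomial.C x + Polynomial.C y * X) : RhoRing R r)
        ∈ nonZeroDivisors (RhoRing R r) ↔
      x ∈ nonZeroDivisors R ∧ x + r * y ∈ nonZeroDivisors R) := by
  have hone : (Ideal.Quotient.mk _ (C (1:R) + C (0:R) * X) : RhoRing R r) = 1 := by
    simp
  constructor
  · constructor
    · intro hz
      obtain ⟨w, hw⟩ := isUnit_iff_exists_inv.1 hz
      obtain ⟨u, v, rfl⟩ := rhoAux_surj r w
      rw [rhoAux_mul, ← hone, rhoAux_eq_iff] at hw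
      obtain ⟨h1, h2⟩ := hw
      refine ⟨IsUnit.of_mul_eq_one u h1, IsUnit.of_mul_eq_one (u + r * v) ?_⟩
      linear_combination h1 + r * h2
    · rintro ⟨hx, hxy⟩
      obtain ⟨u, hu⟩ := hx.exists_right_inv
      obtain ⟨b, hb⟩ := hxy.exists_right_inv
      refine IsUnit.of_mul_eq_one
        (Ideal.Quotient.mk _ (C u + C (-(y * u * b)) * X)) ?_
      rw [rhoAux_mul, hu,
        show x * -(y * u * b) + y * u + r * y * -(y * u * b)
          = y * u * (1 - (x + r * y) * b) by ring, hb]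
      simp
  · constructor
    · intro hz
      constructor
      · refine mem_nonZeroDivisors_iff_right.2 fun a ha => ?_
        have h := mem_nonZeroDivisors_iff_right.1 hz (Ideal.Quotient.mk _ (C (-(r * a)) + C a * X))
          (by rw [mul_comm _ (Ideal.Quotient.mk _ (C x + C y * X)), rhoAux_mul,
                show x * -(r * a) = -r * (a * x) by ring,
                show x * a + y * -(r * a) + r * y * a = a * x by ring, ha]
              simp)
        exact ((rhoAux_zero_iff r _ _).1 h).2
      · refine mem_nonZeroDivisors_iff_right.2 fun a ha => ?_
        have h := mem_nonZeroDivisors_iff_right.1 hz (Ideal.Quotient.mk _ (C 0 + C a * X))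
          (by rw [mul_comm _ (Ideal.Quotient.mk _ (C x + C y * X)), rhoAux_mul,
                show x * a + y * 0 + r * y * a = a * (x + r * y) by ring, ha]
              simp)
        exact ((rhoAux_zero_iff r _ _).1 h).2
    · rintro ⟨hx, hxy⟩
      refine mem_nonZeroDivisors_iff_right.2 fun w hw => ?_
      obtain ⟨u, v, rfl⟩ := rhoAux_surj r w
      rw [mul_comm _ (Ideal.Quotient.mk _ (C x + C y * X)), rhoAux_mul] at hw
      obtain ⟨h1, h2⟩ := (rhoAux_zero_iff r _ _).1 hw
      have hu : u = 0 := mem_nonZeroDivisors_iff_right.1 hx u (by rw [mul_comm]; exact h1)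
      subst hu
      have hv : v = 0 := mem_nonZeroDivisors_iff_right.1 hxy v (by rw [mul_comm]; linear_combination h2)
      subst hv
      rw [(rhoAux_zero_iff r 0 0).2 ⟨rfl, rfl⟩]
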